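/- Let φ = diag(E, −E) with E the n×n identity. An element 𝔛 ∈ 𝔲(n,n) (i.e. 𝔛⁺φ + φ𝔛 = 0) satisfies 𝔛² = 0 if and only if there exists a maximal isotropic n-dimensional subspace z ⊆ ℂ^{2n} with Im(𝔛) ⊆ z ⊆ Ker(𝔛). -/

import Mathlib

open Matrix

noncomputable section SquareZeroAux

/-- Projection onto the first block. -/
def sqzProj1 (n : ℕ) : (Fin n ⊕ Fin n → ℂ) →ₗ[ℂ] EuclideanSpace ℂ (Fin n) where
  toFun v := WithLp.toLp 2 (fun i => v (Sum.inl i))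
  map_add' _ _ := rfl
  map_smul' _ _ := rfl

/-- Projection onto the second block. -/
def sqzProj2 (n : ℕ) : (Fin n ⊕ Fin n → ℂ) →ₗ[ℂ] EuclideanSpace ℂ (Fin n) where
  toFun v := WithLp.toLp 2 (fun i => v (Sum.inr i))
  map_add' _ _ := rfl
  map_smul' _ _ := rfl

/-- The graph of a map `U : ℂⁿ → ℂⁿ` inside `ℂⁿ ⊕ ℂⁿ`. -/
def sqzGraph (n : ℕ) (U : EuclideanSpace ℂ (Fin n) →ₗ[ℂ] EuclideanSpace ℂ (Fin n)) :
    EuclideanSpace ℂ (Fin n) →ₗ[ℂ] (Fin n ⊕ Fin n → ℂ) where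
  toFun a := Sum.elim a (U a)
  map_add' a b := by funext i; cases i <;> simp
  map_smul' c a := by funext i; cases i <;> simp

lemma sqzInner {ι : Type*} [Fintype ι] (a b : EuclideanSpace ℂ ι) :
    star (a : ι → ℂ) ⬝ᵥ (b : ι → ℂ) = (inner ℂ a b : ℂ) := by
  rw [PiLp.inner_apply]
  simp [dotProduct, RCLike.inner_apply, mul_comm]

lemma sqzDotZero {ι : Type*} [Fintype ι] (v : ι → ℂ) (h : star v ⬝ᵥ v = 0) : v = 0 := by
  let v' : EuclideanSpace ℂ ι := WithLp.toLp 2 v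
  have h' : (inner ℂ v' v' : ℂ) = 0 := by
    rw [← sqzInner]; exact h
  exact congrArg WithLp.ofLp ((inner_self_eq_zero (𝕜 := ℂ) (E := EuclideanSpace ℂ ι)).mp h')

lemma sqzForm (n : ℕ) (v w : Fin n ⊕ Fin n → ℂ) :
    star v ⬝ᵥ (Matrix.fromBlocks (1 : Matrix (Fin n) (Fin n) ℂ) 0 0 (-1)).mulVec w =
      star (sqzProj1 n v) ⬝ᵥ (sqzProj1 n w : Fin n → ℂ)
        - star (sqzProj2 n v) ⬝ᵥ (sqzProj2 n w : Fin n → ℂ) := by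
  simp [dotProduct, Matrix.mulVec, Fintype.sum_sum_type, Matrix.fromBlocks,
    Matrix.one_apply, sqzProj1, sqzProj2, LinearMap.coe_mk, AddHom.coe_mk, ite_mul, Finset.sum_ite_eq, mul_comm, sub_eq_add_neg]
  rfl

end SquareZeroAux

theorem square_zero_iff_exists_maximal_isotropic (n : ℕ)
    (X : Matrix (Fin n ⊕ Fin n) (Fin n ⊕ Fin n) ℂ)
    (hX : Xᴴ * Matrix.fromBlocks 1 0 0 (-1) + Matrix.fromBlocks 1 0 0 (-1) * X = 0) :
    X * X = 0 ↔
      ∃ z : Submodule ℂ (Fin n ⊕ Fin n → ℂ),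
        Module.finrank ℂ z = n ∧
        (∀ v ∈ z, ∀ w ∈ z,
          star v ⬝ᵥ (Matrix.fromBlocks (1 : Matrix (Fin n) (Fin n) ℂ) 0 0 (-1)).mulVec w = 0) ∧
        LinearMap.range X.mulVecLin ≤ z ∧ z ≤ LinearMap.ker X.mulVecLin := by
  set φ : Matrix (Fin n ⊕ Fin n) (Fin n ⊕ Fin n) ℂ := Matrix.fromBlocks 1 0 0 (-1) with hφ
  have hφX : φ * X = -(Xᴴ * φ) := eq_neg_of_add_eq_zero_right hX
  have hφφ : φ * φ = 1 := by
    rw [hφ]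
    simp [Matrix.fromBlocks_multiply]
  have hswap : ∀ v u : Fin n ⊕ Fin n → ℂ,
      star v ⬝ᵥ φ.mulVec (X.mulVec u) = -(star (X.mulVec v) ⬝ᵥ φ.mulVec u) := by
    intro v u
    rw [Matrix.mulVec_mulVec, hφX, Matrix.neg_mulVec, dotProduct_neg,
      ← Matrix.mulVec_mulVec, Matrix.dotProduct_mulVec, ← Matrix.star_mulVec]
  constructor
  · intro h2
    -- range X is isotropic
    have hWiso : ∀ a b : Fin n ⊕ Fin n → ℂ,
        star (X.mulVec a) ⬝ᵥ φ.mulVec (X.mulVec b) = 0 := by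
      intro a b
      rw [hswap, Matrix.mulVec_mulVec, h2, Matrix.zero_mulVec]
      simp
    set W : Submodule ℂ (Fin n ⊕ Fin n → ℂ) := LinearMap.range X.mulVecLin with hW
    have hWiso' : ∀ v ∈ W, ∀ w ∈ W, star v ⬝ᵥ φ.mulVec w = 0 := by
      rintro _ ⟨a, rfl⟩ _ ⟨b, rfl⟩
      simpa [Matrix.mulVecLin_apply] using hWiso a b
    -- equal norms of the two projections on W
    have hnorm2 : ∀ v ∈ W, star (sqzProj1 n v) ⬝ᵥ (sqzProj1 n v : Fin n → ℂ)
        = star (sqzProj2 n v) ⬝ᵥ (sqzProj2 n v : Fin n → ℂ) := by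
      intro v hv
      have := hWiso' v hv v hv
      rw [sqzForm] at this
      exact sub_eq_zero.mp this
    -- the first projection is injective on W
    set P : ↥W →ₗ[ℂ] EuclideanSpace ℂ (Fin n) := (sqzProj1 n).comp W.subtype with hP
    have hvzero : ∀ v ∈ W, sqzProj1 n v = 0 → v = 0 := by
      intro v hv h1
      have h2' := hnorm2 v hv
      rw [h1] at h2'
      simp only [WithLp.ofLp_zero, star_zero, zero_dotProduct] at h2'
      have h3 : (sqzProj2 n v : Fin n → ℂ) = 0 := sqzDotZero _ h2'.symm
      funext i
      cases i with
      | inl i => exact congrFun (congrArg WithLp.ofLp h1) i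
      | inr i => exact congrFun h3 i
    have hPinj : Function.Injective P := by
      intro a b hab
      have hmem : ((a : Fin n ⊕ Fin n → ℂ) - b) ∈ W := sub_mem a.2 b.2
      have hz : sqzProj1 n ((a : Fin n ⊕ Fin n → ℂ) - b) = 0 := by
        rw [map_sub, sub_eq_zero]
        exact hab
      exact Subtype.ext (sub_eq_zero.mp (hvzero _ hmem hz))
    set W₁ : Submodule ℂ (EuclideanSpace ℂ (Fin n)) := LinearMap.range P with hW₁
    set e : ↥W ≃ₗ[ℂ] ↥W₁ := LinearEquiv.ofInjective P hPinj with he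
    set L₀ : ↥W₁ →ₗ[ℂ] EuclideanSpace ℂ (Fin n) :=
      ((sqzProj2 n).comp W.subtype).comp e.symm.toLinearMap with hL₀
    have hL₀apply : ∀ w : ↥W, L₀ (e w) = sqzProj2 n (w : Fin n ⊕ Fin n → ℂ) := by
      intro w
      simp [hL₀]
    have hcoe : ∀ w : ↥W, ((e w : ↥W₁) : EuclideanSpace ℂ (Fin n))
        = sqzProj1 n (w : Fin n ⊕ Fin n → ℂ) := by
      intro w
      rw [he, LinearEquiv.ofInjective_apply]
      rfl
    have hL₀norm : ∀ x : ↥W₁, ‖L₀ x‖ = ‖x‖ := by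
      intro x
      obtain ⟨w, rfl⟩ : ∃ w : ↥W, e w = x := ⟨e.symm x, e.apply_symm_apply x⟩
      rw [hL₀apply]
      have hinner : (inner ℂ (sqzProj2 n (w : Fin n ⊕ Fin n → ℂ))
            (sqzProj2 n (w : Fin n ⊕ Fin n → ℂ)) : ℂ)
          = inner ℂ (sqzProj1 n (w : Fin n ⊕ Fin n → ℂ)) (sqzProj1 n (w : Fin n ⊕ Fin n → ℂ)) := by
        rw [← sqzInner, ← sqzInner]
        exact (hnorm2 _ w.2).symm
      have h2' : ‖sqzProj2 n (w : Fin n ⊕ Fin n → ℂ)‖ = ‖sqzProj1 n (w : Fin n ⊕ Fin n → ℂ)‖ := by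
        rw [@norm_eq_sqrt_re_inner ℂ, @norm_eq_sqrt_re_inner ℂ, hinner]
      rw [h2', ← hcoe w]
      rfl
    set L : ↥W₁ →ₗᵢ[ℂ] EuclideanSpace ℂ (Fin n) := ⟨L₀, hL₀norm⟩ with hL
    set U : EuclideanSpace ℂ (Fin n) →ₗᵢ[ℂ] EuclideanSpace ℂ (Fin n) := L.extend with hU
    have hUW : ∀ w : ↥W, U (sqzProj1 n (w : Fin n ⊕ Fin n → ℂ))
        = sqzProj2 n (w : Fin n ⊕ Fin n → ℂ) := by
      intro w
      have h := L.extend_apply (e w)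
      rw [hcoe w] at h
      rw [← hU] at h
      rw [h]
      exact hL₀apply w
    set G : EuclideanSpace ℂ (Fin n) →ₗ[ℂ] (Fin n ⊕ Fin n → ℂ) :=
      sqzGraph n U.toLinearMap with hG
    have hGapply : ∀ a, G a = Sum.elim (a : Fin n → ℂ) (U a : Fin n → ℂ) := fun _ => rfl
    have hGproj1 : ∀ a, sqzProj1 n (G a) = a := fun a => rfl
    have hGproj2 : ∀ a, sqzProj2 n (G a) = U a := fun a => rfl
    have hGinj : Function.Injective G := by
      intro a b hab
      have h := congrArg (sqzProj1 n) hab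
      rwa [hGproj1, hGproj1] at h
    have hziso : ∀ v ∈ LinearMap.range G, ∀ w ∈ LinearMap.range G,
        star v ⬝ᵥ φ.mulVec w = 0 := by
      rintro _ ⟨a, rfl⟩ _ ⟨b, rfl⟩
      rw [sqzForm, hGproj1, hGproj1, hGproj2, hGproj2, sqzInner, sqzInner]
      simp only [LinearIsometry.coe_toLinearMap, LinearIsometry.inner_map_map]
      ring
    have hWz : W ≤ LinearMap.range G := by
      intro v hv
      refine ⟨sqzProj1 n v, ?_⟩
      funext i
      cases i with
      | inl i => rfl
      | inr i =>
        have h := congrFun (congrArg WithLp.ofLp (hUW ⟨v, hv⟩)) i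
        exact h
    refine ⟨LinearMap.range G, ?_, hziso, hWz, ?_⟩
    · rw [LinearMap.finrank_range_of_inj hGinj]
      simp
    · intro v hv
      rw [LinearMap.mem_ker, Matrix.mulVecLin_apply]
      have h0 : star v ⬝ᵥ φ.mulVec (X.mulVec (φ.mulVec (X.mulVec v))) = 0 :=
        hziso v hv _ (hWz ⟨φ.mulVec (X.mulVec v), rfl⟩)
      rw [hswap] at h0
      have hphiphi : φ.mulVec (φ.mulVec (X.mulVec v)) = X.mulVec v := by
        rw [Matrix.mulVec_mulVec, hφφ, Matrix.one_mulVec]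
      rw [hphiphi, neg_eq_zero] at h0
      exact sqzDotZero _ h0
  · rintro ⟨z, -, -, hr, hk⟩
    have h : ∀ v, X.mulVec (X.mulVec v) = 0 := by
      intro v
      have hmem : X.mulVec v ∈ z := hr ⟨v, rfl⟩
      simpa [Matrix.mulVecLin_apply] using hk hmem
    ext i j
    have h' := congrFun (h (Pi.single j 1)) i
    rw [Matrix.mulVec_mulVec] at h'
    simpa [Matrix.mulVec_mulVec, Matrix.mulVec_single] using h'
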